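/- Let M be a smooth manifold, θ a contact-type 1-form with vector field X satisfying ι_X θ = 1, ι_X dθ = 0. Let ∇ be a flat connection on a vector bundle E over M, and L = ∇ι_X + ι_X∇ the twisted Lie derivative on E-valued forms. For μ an E-valued k-form with ι_X μ = 0, define Ψμ = ∇μ − (−1)^k (Lμ) ∧ θ. Then Ψ²μ = −(Lμ) ∧ dθ. -/
import Mathlib


set_option maxHeartbeats 1000000

/-!
STATEMENT 8 (the identity `Ψ² μ = -(L μ) ∧ dθ`).
The complex `Ω = Ω^•(M, E)` of bundle-valued forms on a contact manifold is
axiomatized as a module together with the operators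
* `D` : the twisted differential `∇` (flat: `D² = 0`),
* `I` : contraction `ι_X` with the Reeb field (`I² = 0`),
* `Wθ`, `Wdθ` : wedging on the right by `θ` and by `dθ`,
* `eps` : the sign operator `(-1)^deg`,
subject to the standard graded relations expressing `ι_X θ = 1`
(`I∘Wθ = Wθ∘I + eps`), `ι_X dθ = 0` (`I∘Wdθ = Wdθ∘I`), the graded Leibniz
rule for `∇` (`D∘Wθ = Wθ∘D + Wdθ∘eps`), `d(dθ) = 0` (`D∘Wdθ = Wdθ∘D`),
`θ∧θ = 0` (`Wθ² = 0`), and the parity relations of `eps`.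
With `L = D∘I + I∘D` (the twisted Lie derivative) and
`Ψ = D - Wθ∘L∘eps` (so that `Ψμ = ∇μ - (-1)^k (Lμ)∧θ` on `k`-forms `μ` with
`ι_X μ = 0`), one has `Ψ(Ψμ) = -(Wdθ)(Lμ)`, i.e. `Ψ²μ = -(Lμ)∧dθ`. -/
theorem stmt8 (K : Type*) [Field K] (Ω : Type*) [AddCommGroup Ω] [Module K Ω]
    (D I Wθ Wdθ eps : Module.End K Ω)
    (hDD : D * D = 0)
    (hII : I * I = 0)
    (hWθWθ : Wθ * Wθ = 0)
    (hIWθ : I * Wθ = Wθ * I + eps)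
    (hIWdθ : I * Wdθ = Wdθ * I)
    (hDWθ : D * Wθ = Wθ * D + Wdθ * eps)
    (hDWdθ : D * Wdθ = Wdθ * D)
    (heps2 : eps * eps = 1)
    (hepsD : eps * D = -(D * eps))
    (hepsI : eps * I = -(I * eps))
    (hepsWθ : eps * Wθ = -(Wθ * eps))
    (hepsWdθ : eps * Wdθ = Wdθ * eps)
    (L Ψ : Module.End K Ω)
    (hL : L = D * I + I * D)
    (hΨ : Ψ = D - Wθ * L * eps) :
    ∀ μ : Ω, I μ = 0 → Ψ (Ψ μ) = -(Wdθ (L μ)) := by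

  have hDD' : ∀ x : Module.End K Ω, D * (D * x) = 0 := fun x => by
    rw [← mul_assoc, hDD, zero_mul]
  have hII' : ∀ x : Module.End K Ω, I * (I * x) = 0 := fun x => by
    rw [← mul_assoc, hII, zero_mul]
  have hWθWθ' : ∀ x : Module.End K Ω, Wθ * (Wθ * x) = 0 := fun x => by
    rw [← mul_assoc, hWθWθ, zero_mul]
  have hIWθ' : ∀ x : Module.End K Ω, I * (Wθ * x) = Wθ * (I * x) + eps * x := fun x => by
    rw [← mul_assoc, hIWθ, add_mul, mul_assoc]
  have hIWdθ' : ∀ x : Module.End K Ω, I * (Wdθ * x) = Wdθ * (I * x) := fun x => by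
    rw [← mul_assoc, hIWdθ, mul_assoc]
  have hDWθ' : ∀ x : Module.End K Ω, D * (Wθ * x) = Wθ * (D * x) + Wdθ * (eps * x) := fun x => by
    rw [← mul_assoc, hDWθ, add_mul, mul_assoc, mul_assoc]
  have hDWdθ' : ∀ x : Module.End K Ω, D * (Wdθ * x) = Wdθ * (D * x) := fun x => by
    rw [← mul_assoc, hDWdθ, mul_assoc]
  have heps2' : ∀ x : Module.End K Ω, eps * (eps * x) = x := fun x => by
    rw [← mul_assoc, heps2, one_mul]
  have hepsD' : ∀ x : Module.End K Ω, eps * (D * x) = -(D * (eps * x)) := fun x => by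
    rw [← mul_assoc, hepsD, neg_mul, mul_assoc]
  have hepsI' : ∀ x : Module.End K Ω, eps * (I * x) = -(I * (eps * x)) := fun x => by
    rw [← mul_assoc, hepsI, neg_mul, mul_assoc]
  have hepsWθ' : ∀ x : Module.End K Ω, eps * (Wθ * x) = -(Wθ * (eps * x)) := fun x => by
    rw [← mul_assoc, hepsWθ, neg_mul, mul_assoc]
  have hepsWdθ' : ∀ x : Module.End K Ω, eps * (Wdθ * x) = Wdθ * (eps * x) := fun x => by
    rw [← mul_assoc, hepsWdθ, mul_assoc]
  have key : Ψ * Ψ = -(Wdθ * L) := by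
    rw [hΨ, hL]
    simp only [mul_sub, sub_mul, mul_add, add_mul, mul_assoc, mul_neg, neg_mul, neg_neg,
      mul_zero, zero_mul, neg_zero,
      hDD', hII', hWθWθ', hIWθ', hIWdθ', hDWθ', hDWdθ', heps2', hepsD', hepsI', hepsWθ',
      hepsWdθ', hDD, hII, hWθWθ, hIWθ, hIWdθ, hDWθ, hDWdθ, heps2, hepsD, hepsI, hepsWθ,
      hepsWdθ, mul_one, one_mul, sub_zero, zero_sub, add_zero, zero_add]
    abel
  intro μ _
  have h := congrArg (fun f : Module.End K Ω => f μ) key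
  simpa using h
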